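/- Suppose x_n satisfies the recursion E_{n-1}||x_n - x*||² ≤ (1 - μη_n + C₁η_n²)||x_{n-1} - x*||² + C₁η_n² with η_n = η n^{-α}, α ∈ (0,1), μ, C₁, η > 0. Then E||x_n - x*||² ≲ n^{-α}(1 + ||x_0 - x*||²), with the implicit constant depending only on μ, C₁, η, α. -/
import Mathlib


open MeasureTheory

private lemma ratio_aux (α : ℝ) (hα1 : α < 1) (n : ℕ) (hn : 2 ≤ n) :
    ((n - 1 : ℕ) : ℝ) ^ (-α) ≤ (1 + 2 / (n : ℝ)) * (n : ℝ) ^ (-α) := by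
  have hb0 : (0:ℝ) < (n:ℝ) := by positivity
  have ha1 : (1:ℝ) ≤ ((n-1:ℕ):ℝ) := by
    have : 1 ≤ n - 1 := by omega
    exact_mod_cast this
  have ha0 : (0:ℝ) < ((n-1:ℕ):ℝ) := by linarith
  set a := ((n-1:ℕ):ℝ)
  set b := (n:ℝ)
  have hba : b = a + 1 := by
    have : n = (n-1) + 1 := by omega
    rw [show b = ((n:ℕ):ℝ) from rfl, this]
    push_cast; ring
  have hb2a : b ≤ 2 * a := by
    have : n ≤ 2 * (n-1) := by omega
    calc b = ((n:ℕ):ℝ) := rfl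
      _ ≤ ((2*(n-1):ℕ):ℝ) := by exact_mod_cast this
      _ = 2 * a := by push_cast; ring
  have h1 : (b/a) ^ α ≤ b/a := by
    calc (b/a)^α ≤ (b/a)^(1:ℝ) :=
          Real.rpow_le_rpow_of_exponent_le (by rw [le_div_iff₀ ha0]; linarith) hα1.le
      _ = b/a := Real.rpow_one _
  have h2 : b/a ≤ 1 + 2/b := by
    rw [div_le_iff₀ ha0]
    have h3 : (1 + 2/b) * a = a + 2*a/b := by ring
    rw [h3]
    have h4 : (2:ℝ)*a/b ≥ 1 := by
      rw [ge_iff_le, le_div_iff₀ hb0]; linarith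
    linarith
  have key : a^(-α) = b^(-α) * ((b/a)^α) := by
    rw [Real.div_rpow hb0.le ha0.le, Real.rpow_neg hb0.le, Real.rpow_neg ha0.le]
    have h5 : (b^α) ≠ 0 := (Real.rpow_pos_of_pos hb0 α).ne'
    field_simp
  calc a^(-α) = b^(-α) * ((b/a)^α) := key
    _ ≤ b^(-α) * (1 + 2/b) := by
        exact mul_le_mul_of_nonneg_left (h1.trans h2) (Real.rpow_nonneg hb0.le _)
    _ = (1 + 2/b) * b^(-α) := by ring

private lemma anti_aux (α : ℝ) (hα0 : 0 < α) {m n : ℕ} (hm : 1 ≤ m) (hmn : m ≤ n) :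
    ((n:ℝ)) ^ (-α) ≤ ((m:ℝ)) ^ (-α) := by
  have hm0 : (0:ℝ) < (m:ℝ) := by exact_mod_cast Nat.pos_of_ne_zero (by omega)
  have hn0 : (0:ℝ) < (n:ℝ) := by
    have : 1 ≤ n := le_trans hm hmn
    exact_mod_cast Nat.pos_of_ne_zero (by omega)
  rw [Real.rpow_neg hm0.le, Real.rpow_neg hn0.le]
  have h1 : (m:ℝ)^α ≤ (n:ℝ)^α := Real.rpow_le_rpow hm0.le (by exact_mod_cast hmn) hα0.le
  exact inv_anti₀ (Real.rpow_pos_of_pos hm0 α) h1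

/-- Purely algebraic induction step. -/
private lemma step_aux (μc C₁ η M zn zm p q e t w : ℝ)
    (hμc : 0 < μc) (hC₁ : 0 < C₁) (hη : 0 < η) (hM : 0 < M)
    (hzn : 0 ≤ zn) (h1w : 1 ≤ w)
    (he : e = η * q) (hq : 0 ≤ q)
    (he1 : e * μc ≤ 1) (he2 : e * (2*C₁) ≤ μc)
    (hratio : p ≤ (1 + t) * q) (ht : 0 ≤ t) (hts : t ≤ (μc/4)*e)
    (hCM : 4*C₁*η ≤ μc * M)
    (ih : zn ≤ M * p * w)
    (hrec : zm ≤ (1 - μc*e + C₁*e^2) * zn + C₁*e^2) :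
    zm ≤ M * q * w := by
  have henn : 0 ≤ e := he ▸ mul_nonneg hη.le hq
  have hw0 : (0:ℝ) ≤ w := by linarith
  have ha : 1 - μc*e + C₁*e^2 ≤ 1 - (μc/2)*e := by
    nlinarith [mul_le_mul_of_nonneg_right he2 henn]
  have hapos : 0 ≤ 1 - (μc/2)*e := by nlinarith
  have s1 : zm ≤ (1 - (μc/2)*e) * zn + C₁*e^2 := by
    nlinarith [mul_le_mul_of_nonneg_right ha hzn]
  have s2 : zn ≤ M * ((1 + t) * q) * w := by
    calc zn ≤ M * p * w := ih
      _ ≤ M * ((1 + t) * q) * w :=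
          mul_le_mul_of_nonneg_right (mul_le_mul_of_nonneg_left hratio hM.le) hw0
  have s4 : (1 - (μc/2)*e) * (1 + t) ≤ 1 - (μc/4)*e := by
    nlinarith [mul_nonneg henn ht]
  have s5 : (1 - (μc/2)*e) * zn ≤ (1 - (μc/4)*e) * (M * q * w) := by
    calc (1 - (μc/2)*e) * zn
        ≤ (1 - (μc/2)*e) * (M * ((1 + t) * q) * w) := mul_le_mul_of_nonneg_left s2 hapos
      _ = ((1 - (μc/2)*e) * (1 + t)) * (q * (M * w)) := by ring
      _ ≤ (1 - (μc/4)*e) * (q * (M * w)) := by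
          exact mul_le_mul_of_nonneg_right s4 (mul_nonneg hq (mul_nonneg hM.le hw0))
      _ = (1 - (μc/4)*e) * (M * q * w) := by ring
  have s6 : C₁*e^2 ≤ (μc/4)*e * (M * q * w) := by
    have hCM2 : C₁ * η ≤ (μc/4) * M * w := by nlinarith [mul_nonneg (mul_pos hμc hM).le (by linarith : (0:ℝ) ≤ w - 1)]
    calc C₁*e^2 = (C₁ * η) * (q * e) := by rw [he]; ring
      _ ≤ ((μc/4) * M * w) * (q * e) :=
          mul_le_mul_of_nonneg_right hCM2 (mul_nonneg hq henn)
      _ = (μc/4)*e * (M * q * w) := by ring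
  linarith

private lemma finite_bound (μc C₁ η α : ℝ) (hC₁ : 0 < C₁) :
    ∀ N : ℕ, ∃ G : ℝ, 1 ≤ G ∧ ∀ z : ℕ → ℝ, (∀ n, 0 ≤ z n) →
      (∀ n : ℕ, 1 ≤ n →
        z n ≤ (1 - μc * (η * (n:ℝ) ^ (-α)) + C₁ * (η * (n:ℝ) ^ (-α)) ^ 2) * z (n-1)
          + C₁ * (η * (n:ℝ) ^ (-α)) ^ 2) →
      ∀ j ≤ N, z j ≤ G * (1 + z 0) := by
  intro N
  induction N with
  | zero =>
    refine ⟨1, le_refl 1, fun z hz _ j hj => ?_⟩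
    interval_cases j
    linarith [hz 0]
  | succ N ih =>
    obtain ⟨G, hG1, hG⟩ := ih
    set e : ℝ := η * ((N+1:ℕ):ℝ) ^ (-α) with he
    set A : ℝ := 1 - μc * e + C₁ * e^2 with hA
    set B : ℝ := C₁ * e^2 with hB
    have hBnn : 0 ≤ B := mul_nonneg hC₁.le (sq_nonneg _)
    refine ⟨max G (|A| * G + B), le_trans hG1 (le_max_left _ _), ?_⟩
    intro z hz hrec j hj
    rcases Nat.lt_or_ge j (N+1) with hj' | hj'
    · have := hG z hz hrec j (by omega)
      have h1z : (0:ℝ) ≤ 1 + z 0 := by linarith [hz 0]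
      nlinarith [le_max_left G (|A| * G + B), this]
    · have hjeq : j = N + 1 := by omega
      subst hjeq
      have h1 := hrec (N+1) (by omega)
      simp only [Nat.add_sub_cancel] at h1
      have h1' : z (N+1) ≤ A * z N + B := by rw [hA, hB, he]; exact h1
      have h2 : z N ≤ G * (1 + z 0) := hG z hz hrec N (by omega)
      have h3 : A * z N ≤ |A| * z N := mul_le_mul_of_nonneg_right (le_abs_self A) (hz N)
      have h4 : |A| * z N ≤ |A| * (G * (1 + z 0)) := mul_le_mul_of_nonneg_left h2 (abs_nonneg A)
      have h1z : (1:ℝ) ≤ 1 + z 0 := by linarith [hz 0]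
      have h5 : B ≤ B * (1 + z 0) := le_mul_of_one_le_right hBnn h1z
      have h6 : |A| * G + B ≤ max G (|A| * G + B) := le_max_right _ _
      have h7 : (0:ℝ) ≤ 1 + z 0 := by linarith
      nlinarith [mul_le_mul_of_nonneg_right h6 h7]

private lemma det_bound (μc C₁ η α : ℝ) (hμc : 0 < μc) (hC₁ : 0 < C₁) (hη : 0 < η)
    (hα0 : 0 < α) (hα1 : α < 1) :
    ∃ K : ℝ, 0 < K ∧ ∀ z : ℕ → ℝ, (∀ n, 0 ≤ z n) →
      (∀ n : ℕ, 1 ≤ n →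
        z n ≤ (1 - μc * (η * (n:ℝ) ^ (-α)) + C₁ * (η * (n:ℝ) ^ (-α)) ^ 2) * z (n-1)
          + C₁ * (η * (n:ℝ) ^ (-α)) ^ 2) →
      ∀ n : ℕ, 1 ≤ n → z n ≤ K * (n:ℝ) ^ (-α) * (1 + z 0) := by
  have hr : (0:ℝ) < min (1/μc) (μc/(2*C₁)) := lt_min (by positivity) (by positivity)
  set r : ℝ := min (1/μc) (μc/(2*C₁)) with hrdef
  set Aq : ℝ := (η/r) ^ (α⁻¹) with hAq
  set Bq : ℝ := (8/(μc*η)) ^ ((1-α)⁻¹) with hBq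
  obtain ⟨N, hNgt⟩ := exists_nat_gt (max (max Aq Bq) 2)
  have hN2 : 2 ≤ N := by
    have h2 : (2:ℝ) < (N:ℝ) := lt_of_le_of_lt (le_max_right _ _) hNgt
    exact_mod_cast h2.le
  have hAqnn : 0 ≤ Aq := Real.rpow_nonneg (by positivity) _
  have hBqnn : 0 ≤ Bq := Real.rpow_nonneg (by positivity) _
  have hsmall : ∀ n : ℕ, N ≤ n → η * (n:ℝ) ^ (-α) ≤ r := by
    intro n hn
    have hn0 : (0:ℝ) < (n:ℝ) := by
      have : 0 < n := by omega
      exact_mod_cast this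
    have hAn : Aq ≤ (n:ℝ) := by
      have h1 : Aq ≤ (N:ℝ) := le_trans (le_trans (le_max_left _ _) (le_max_left _ _)) hNgt.le
      have h2 : (N:ℝ) ≤ (n:ℝ) := by exact_mod_cast hn
      linarith
    have hpow : η / r ≤ (n:ℝ) ^ α := by
      have h1 : Aq ^ α ≤ (n:ℝ) ^ α := Real.rpow_le_rpow hAqnn hAn hα0.le
      have h2 : Aq ^ α = η / r := by
        rw [hAq, ← Real.rpow_mul (by positivity), inv_mul_cancel₀ hα0.ne', Real.rpow_one]
      linarith
    have hna : (0:ℝ) < (n:ℝ) ^ α := Real.rpow_pos_of_pos hn0 α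
    rw [Real.rpow_neg hn0.le]
    rw [div_le_iff₀ hr] at hpow
    calc η * ((n:ℝ)^α)⁻¹ ≤ ((n:ℝ)^α * r) * ((n:ℝ)^α)⁻¹ :=
          mul_le_mul_of_nonneg_right hpow (by positivity)
      _ = r := by field_simp
  have htwo : ∀ n : ℕ, N ≤ n → 2/(n:ℝ) ≤ (μc/4) * (η * (n:ℝ) ^ (-α)) := by
    intro n hn
    have hn0 : (0:ℝ) < (n:ℝ) := by
      have : 0 < n := by omega
      exact_mod_cast this
    have hBn : Bq ≤ (n:ℝ) := by
      have h1 : Bq ≤ (N:ℝ) := le_trans (le_trans (le_max_right _ _) (le_max_left _ _)) hNgt.le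
      have h2 : (N:ℝ) ≤ (n:ℝ) := by exact_mod_cast hn
      linarith
    have hpow : 8/(μc*η) ≤ (n:ℝ) ^ (1-α) := by
      have h1 : Bq ^ (1-α) ≤ (n:ℝ) ^ (1-α) := Real.rpow_le_rpow hBqnn hBn (by linarith)
      have h2 : Bq ^ (1-α) = 8/(μc*η) := by
        rw [hBq, ← Real.rpow_mul (by positivity), inv_mul_cancel₀ (by linarith : (1:ℝ)-α ≠ 0),
          Real.rpow_one]
      linarith
    have hsplit : (n:ℝ) ^ (1-α) = (n:ℝ) * (n:ℝ) ^ (-α) := by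
      rw [show (1:ℝ) - α = 1 + (-α) by ring, Real.rpow_add hn0, Real.rpow_one]
    rw [hsplit] at hpow
    rw [div_le_iff₀ (by positivity : (0:ℝ) < μc*η)] at hpow
    have hnra : (0:ℝ) ≤ (n:ℝ) ^ (-α) := Real.rpow_nonneg hn0.le _
    rw [div_le_iff₀ hn0]
    nlinarith
  obtain ⟨G, hG1, hG⟩ := finite_bound μc C₁ η α hC₁ N
  have hN0 : (0:ℝ) < (N:ℝ) := by
    have : 0 < N := by omega
    exact_mod_cast this
  set M : ℝ := max (G * (N:ℝ)^α) (4*C₁*η/μc) with hM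
  have hMpos : 0 < M := lt_of_lt_of_le (by positivity) (le_max_right _ _)
  have hNone : (N:ℝ)^α * (N:ℝ)^(-α) = 1 := by
    rw [← Real.rpow_add hN0]; simp
  have hGM : G ≤ M * (N:ℝ)^(-α) := by
    have h1 : G * (N:ℝ)^α ≤ M := le_max_left _ _
    have h2 : (0:ℝ) ≤ (N:ℝ)^(-α) := Real.rpow_nonneg hN0.le _
    calc G = G * ((N:ℝ)^α * (N:ℝ)^(-α)) := by rw [hNone]; ring
      _ = (G * (N:ℝ)^α) * (N:ℝ)^(-α) := by ring
      _ ≤ M * (N:ℝ)^(-α) := mul_le_mul_of_nonneg_right h1 h2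
  have hCM : 4*C₁*η ≤ μc * M := by
    have h1 : 4*C₁*η/μc ≤ M := le_max_right _ _
    rw [div_le_iff₀ hμc] at h1
    linarith [mul_comm M μc]
  refine ⟨M, hMpos, ?_⟩
  intro z hz hrec n hn
  have h1z : (1:ℝ) ≤ 1 + z 0 := by linarith [hz 0]
  have h1znn : (0:ℝ) ≤ 1 + z 0 := by linarith
  have key : ∀ n : ℕ, N ≤ n → z n ≤ M * (n:ℝ)^(-α) * (1 + z 0) := by
    intro n hn
    induction n, hn using Nat.le_induction with
    | base =>
      calc z N ≤ G * (1 + z 0) := hG z hz hrec N (le_refl N)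
        _ ≤ (M * (N:ℝ)^(-α)) * (1 + z 0) := mul_le_mul_of_nonneg_right hGM h1znn
        _ = M * (N:ℝ)^(-α) * (1 + z 0) := by ring
    | succ n hn ih =>
      have hm0 : (0:ℝ) < ((n+1:ℕ):ℝ) := by positivity
      have hq : (0:ℝ) ≤ ((n+1:ℕ):ℝ)^(-α) := Real.rpow_nonneg hm0.le _
      have her : η * ((n+1:ℕ):ℝ)^(-α) ≤ r := hsmall (n+1) (by omega)
      have he1 : (η * ((n+1:ℕ):ℝ)^(-α)) * μc ≤ 1 := by
        have h := le_trans her (min_le_left _ _)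
        rw [le_div_iff₀ hμc] at h
        linarith
      have he2 : (η * ((n+1:ℕ):ℝ)^(-α)) * (2*C₁) ≤ μc := by
        have h := le_trans her (min_le_right _ _)
        rw [le_div_iff₀ (by positivity : (0:ℝ) < 2*C₁)] at h
        linarith
      have hratio : ((n:ℕ):ℝ)^(-α) ≤ (1 + 2/((n+1:ℕ):ℝ)) * ((n+1:ℕ):ℝ)^(-α) := by
        have h := ratio_aux α hα1 (n+1) (by omega)
        simpa using h
      have hts : 2/((n+1:ℕ):ℝ) ≤ (μc/4) * (η * ((n+1:ℕ):ℝ)^(-α)) := htwo (n+1) (by omega)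
      have hrec1 : z (n+1) ≤ (1 - μc * (η * ((n+1:ℕ):ℝ)^(-α))
          + C₁ * (η * ((n+1:ℕ):ℝ)^(-α))^2) * z n + C₁ * (η * ((n+1:ℕ):ℝ)^(-α))^2 := by
        have h := hrec (n+1) (by omega)
        simpa using h
      exact step_aux μc C₁ η M (z n) (z (n+1)) ((n:ℝ)^(-α)) (((n+1:ℕ):ℝ)^(-α))
        (η * ((n+1:ℕ):ℝ)^(-α)) (2/((n+1:ℕ):ℝ)) (1 + z 0)
        hμc hC₁ hη hMpos (hz n) h1z rfl hq he1 he2 hratio (by positivity) hts hCM ih hrec1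
  rcases Nat.lt_or_ge n N with hnN | hnN
  · have h1 := hG z hz hrec n (by omega)
    have h2 : (N:ℝ)^(-α) ≤ (n:ℝ)^(-α) := anti_aux α hα0 hn hnN.le
    have h3 : G ≤ M * (n:ℝ)^(-α) := le_trans hGM (mul_le_mul_of_nonneg_left h2 hMpos.le)
    calc z n ≤ G * (1 + z 0) := h1
      _ ≤ (M * (n:ℝ)^(-α)) * (1 + z 0) := mul_le_mul_of_nonneg_right h3 h1znn
      _ = M * (n:ℝ)^(-α) * (1 + z 0) := by ring
  · exact key n hnN

/-- If the iterates `x n` satisfy the conditional recursion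
`E_{n-1}‖x n - x*‖² ≤ (1 - μ η_n + C₁ η_n²) ‖x_{n-1} - x*‖² + C₁ η_n²` with `η_n = η n^{-α}`,
`α ∈ (0,1)`, then `E‖x n - x*‖² ≤ K n^{-α} (1 + ‖x₀ - x*‖²)` where `K` depends only on
`μ, C₁, η, α`. -/
theorem stmt_16 (μc C₁ η α : ℝ) (hμc : 0 < μc) (hC₁ : 0 < C₁) (hη : 0 < η)
    (hα : 0 < α ∧ α < 1) :
    ∃ K : ℝ, 0 < K ∧
      ∀ (Ω : Type) (m0 : MeasurableSpace Ω) (μ : Measure Ω), IsProbabilityMeasure μ →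
      ∀ (E : Type) [NormedAddCommGroup E] [NormedSpace ℝ E] [CompleteSpace E],
      ∀ (𝒢 : Filtration ℕ m0) (x : ℕ → Ω → E) (xstar x₀ : E),
        (∀ ω, x 0 ω = x₀) →
        (∀ n, StronglyMeasurable[𝒢 n] (x n)) →
        (∀ n, Integrable (fun ω => ‖x n ω - xstar‖ ^ 2) μ) →
        (∀ n : ℕ, 1 ≤ n →
          μ[fun ω => ‖x n ω - xstar‖ ^ 2|𝒢 (n - 1)] ≤ᵐ[μ]
            fun ω => (1 - μc * (η * (n : ℝ) ^ (-α)) + C₁ * (η * (n : ℝ) ^ (-α)) ^ 2) *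
              ‖x (n - 1) ω - xstar‖ ^ 2 + C₁ * (η * (n : ℝ) ^ (-α)) ^ 2) →
        ∀ n : ℕ, 1 ≤ n →
          (∫ ω, ‖x n ω - xstar‖ ^ 2 ∂μ) ≤ K * (n : ℝ) ^ (-α) * (1 + ‖x₀ - xstar‖ ^ 2) := by
  obtain ⟨K, hK, hdet⟩ := det_bound μc C₁ η α hμc hC₁ hη hα.1 hα.2
  refine ⟨K, hK, ?_⟩
  intro Ω m0 μ hprob E _ _ _ 𝒢 x xstar x₀ h0 hmeas hint hrec n hn
  set z : ℕ → ℝ := fun k => ∫ ω, ‖x k ω - xstar‖ ^ 2 ∂μ with hzdef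
  have hznn : ∀ k, 0 ≤ z k := fun k => integral_nonneg (fun ω => by positivity)
  have hz0 : z 0 = ‖x₀ - xstar‖ ^ 2 := by
    simp only [hzdef, h0]
    simp
  have hzrec : ∀ k : ℕ, 1 ≤ k →
      z k ≤ (1 - μc * (η * (k:ℝ) ^ (-α)) + C₁ * (η * (k:ℝ) ^ (-α)) ^ 2) * z (k-1)
        + C₁ * (η * (k:ℝ) ^ (-α)) ^ 2 := by
    intro k hk
    set a : ℝ := 1 - μc * (η * (k:ℝ) ^ (-α)) + C₁ * (η * (k:ℝ) ^ (-α)) ^ 2 with hadef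
    set b : ℝ := C₁ * (η * (k:ℝ) ^ (-α)) ^ 2 with hbdef
    have h1 : z k = ∫ ω, (μ[fun ω => ‖x k ω - xstar‖ ^ 2|𝒢 (k-1)]) ω ∂μ :=
      (integral_condExp (𝒢.le (k-1))).symm
    have hig : Integrable (fun ω => a * ‖x (k-1) ω - xstar‖ ^ 2 + b) μ :=
      ((hint (k-1)).const_mul a).add (integrable_const b)
    have h2 : ∫ ω, (μ[fun ω => ‖x k ω - xstar‖ ^ 2|𝒢 (k-1)]) ω ∂μ ≤
        ∫ ω, (a * ‖x (k-1) ω - xstar‖ ^ 2 + b) ∂μ :=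
      integral_mono_ae integrable_condExp hig (hrec k hk)
    have h3 : ∫ ω, (a * ‖x (k-1) ω - xstar‖ ^ 2 + b) ∂μ = a * z (k-1) + b := by
      rw [integral_add ((hint (k-1)).const_mul a) (integrable_const b),
        integral_const_mul, integral_const]
      simp [hzdef]
    rw [h1]
    rw [h3] at h2
    exact h2
  have := hdet z hznn hzrec n hn
  rw [hz0] at this
  exact this
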